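/- Let F_q be a finite field, H_A ∈ F_q^{m_A×n_A} and H_B ∈ F_q^{m_B×n_B} matrices with ranks r_A = rank(H_A) and r_B = rank(H_B). Define the hypergraph product parity-check matrices H_X = [I_{m_A} ⊗ H_B | H_A ⊗ I_{m_B}] and H_Z = [H_Aᵀ ⊗ I_{n_B} | −I_{n_A} ⊗ H_Bᵀ], acting on n = m_A·n_B + n_A·m_B coordinates. Then n − rank(H_X) − rank(H_Z) = (n_A − r_A)(m_B − r_B) + (m_A − r_A)(n_B − r_B); i.e., the qudit hypergraph product code encodes k = k_A·k_Bᵀ + k_Aᵀ·k_B logical qudits, where k_A = n_A − r_A, k_Aᵀ = m_A − r_A, k_B = n_B − r_B, k_Bᵀ = m_B − r_B. -/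

import Mathlib

open Matrix Kronecker

section Aux

variable {F : Type*} [Field F]

open Module LinearMap

/-- Every linear map between vector spaces has a generalized inverse. -/
lemma exists_gen_inverse_lin {V W : Type*} [AddCommGroup V] [AddCommGroup W]
    [Module F V] [Module F W] (f : V →ₗ[F] W) :
    ∃ g : W →ₗ[F] V, f ∘ₗ g ∘ₗ f = f := by
  obtain ⟨s, hs⟩ := f.rangeRestrict.exists_rightInverse_of_surjective
    (LinearMap.range_rangeRestrict f)
  obtain ⟨q, hq⟩ := (LinearMap.range f).exists_isCompl
  refine ⟨s ∘ₗ (Submodule.linearProjOfIsCompl _ q hq), ?_⟩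
  ext x
  simp only [LinearMap.comp_apply]
  have h1 : (Submodule.linearProjOfIsCompl _ q hq) (f x)
      = ⟨f x, LinearMap.mem_range_self f x⟩ :=
    Submodule.linearProjOfIsCompl_apply_left hq ⟨f x, LinearMap.mem_range_self f x⟩
  rw [h1]
  have h2 : f.rangeRestrict (s ⟨f x, LinearMap.mem_range_self f x⟩)
      = ⟨f x, LinearMap.mem_range_self f x⟩ := by
    have := congrArg (fun (h : _ →ₗ[F] _) => h ⟨f x, LinearMap.mem_range_self f x⟩) hs
    exact this
  have h3 : f (s ⟨f x, LinearMap.mem_range_self f x⟩)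
      = ((f.rangeRestrict (s ⟨f x, LinearMap.mem_range_self f x⟩) : LinearMap.range f) : W) := rfl
  rw [h3, h2]

/-- Every matrix over a field has a generalized inverse. -/
lemma exists_gen_inverse {m n : Type*} [Fintype m] [Fintype n] [DecidableEq m] [DecidableEq n]
    (A : Matrix m n F) : ∃ G : Matrix n m F, A * G * A = A := by
  obtain ⟨g, hg⟩ := exists_gen_inverse_lin (Matrix.toLin' A)
  refine ⟨LinearMap.toMatrix' g, ?_⟩
  apply Matrix.toLin'.injective
  rw [Matrix.toLin'_mul, Matrix.toLin'_mul, Matrix.toLin'_toMatrix', LinearMap.comp_assoc]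
  exact hg

/-- The dimension of the range of a tensor product of linear maps is the product of the
dimensions of the ranges. -/
lemma finrank_range_tensor_map {V W V' W' : Type*} [AddCommGroup V] [AddCommGroup W]
    [AddCommGroup V'] [AddCommGroup W'] [Module F V] [Module F W] [Module F V'] [Module F W']
    [FiniteDimensional F W] [FiniteDimensional F W']
    (f : V →ₗ[F] W) (g : V' →ₗ[F] W') :
    finrank F (LinearMap.range (TensorProduct.map f g)) =
      finrank F (LinearMap.range f) * finrank F (LinearMap.range g) := by
  have h1 : TensorProduct.map f g =
      TensorProduct.mapIncl (LinearMap.range f) (LinearMap.range g) ∘ₗ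
        TensorProduct.map f.rangeRestrict g.rangeRestrict := by
    rw [TensorProduct.mapIncl, ← TensorProduct.map_comp]
    congr 1
  have hsurj : LinearMap.range (TensorProduct.map f.rangeRestrict g.rangeRestrict) = ⊤ :=
    LinearMap.range_eq_top.2 (TensorProduct.map_surjective f.surjective_rangeRestrict
      g.surjective_rangeRestrict)
  have h2 : LinearMap.range (TensorProduct.map f g) =
      LinearMap.range (TensorProduct.mapIncl (LinearMap.range f) (LinearMap.range g)) := by
    rw [h1, LinearMap.range_comp, hsurj, Submodule.map_top]
  have hinj : Function.Injective
      (TensorProduct.mapIncl (LinearMap.range f) (LinearMap.range g)) := by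
    rw [TensorProduct.mapIncl, ← LinearMap.rTensor_comp_lTensor]
    exact (Module.Flat.rTensor_preserves_injective_linearMap _
        (Submodule.injective_subtype _)).comp
      (Module.Flat.lTensor_preserves_injective_linearMap _ (Submodule.injective_subtype _))
  rw [h2, (LinearMap.finrank_range_of_inj hinj), Module.finrank_tensorProduct]

/-- The rank of a Kronecker product is the product of the ranks. -/
lemma rank_kron {m n p q : Type*} [Fintype m] [Fintype n] [Fintype p] [Fintype q]
    [DecidableEq m] [DecidableEq n] [DecidableEq p] [DecidableEq q]
    (A : Matrix m n F) (B : Matrix p q F) :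
    (A ⊗ₖ B).rank = A.rank * B.rank := by
  let bm := Pi.basisFun F m
  let bn := Pi.basisFun F n
  let bp := Pi.basisFun F p
  let bq := Pi.basisFun F q
  rw [Matrix.rank_eq_finrank_range_toLin (A ⊗ₖ B) (bm.tensorProduct bp) (bn.tensorProduct bq),
    Matrix.toLin_kronecker, finrank_range_tensor_map,
    ← Matrix.rank_eq_finrank_range_toLin A bm bn, ← Matrix.rank_eq_finrank_range_toLin B bp bq]

/-- The column space of a block matrix `[C | D]` is the sup of the column spaces. -/
lemma range_fromColumns {m n₁ n₂ : Type*} [Fintype n₁] [Fintype n₂]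
    (C : Matrix m n₁ F) (D : Matrix m n₂ F) :
    LinearMap.range (fromCols C D).mulVecLin =
      LinearMap.range C.mulVecLin ⊔ LinearMap.range D.mulVecLin := by
  apply le_antisymm
  · rintro v ⟨x, rfl⟩
    have hx : x = Sum.elim (x ∘ Sum.inl) (x ∘ Sum.inr) := by ext (i | i) <;> rfl
    rw [Matrix.mulVecLin_apply, hx, fromCols_mulVec_sumElim]
    exact Submodule.add_mem_sup ⟨_, rfl⟩ ⟨_, rfl⟩
  · rw [sup_le_iff]
    constructor
    · rintro v ⟨x, rfl⟩
      exact ⟨Sum.elim x 0, by rw [Matrix.mulVecLin_apply, fromCols_mulVec_sumElim]; simp⟩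
    · rintro v ⟨x, rfl⟩
      exact ⟨Sum.elim 0 x, by rw [Matrix.mulVecLin_apply, fromCols_mulVec_sumElim]; simp⟩

/-- Key intersection lemma: `colsp(I ⊗ B) ∩ colsp(A ⊗ I) = colsp(A ⊗ B)`. -/
lemma inf_range_kron {mA nA mB nB : Type*} [Fintype mA] [Fintype nA] [Fintype mB] [Fintype nB]
    [DecidableEq mA] [DecidableEq nA] [DecidableEq mB] [DecidableEq nB]
    (A : Matrix mA nA F) (B : Matrix mB nB F) :
    LinearMap.range ((1 : Matrix mA mA F) ⊗ₖ B).mulVecLin ⊓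
        LinearMap.range (A ⊗ₖ (1 : Matrix mB mB F)).mulVecLin =
      LinearMap.range (A ⊗ₖ B).mulVecLin := by
  apply le_antisymm
  · rintro v ⟨⟨x, hx⟩, ⟨y, hy⟩⟩
    simp only [Matrix.mulVecLin_apply] at hx hy
    obtain ⟨GA, hGA⟩ := exists_gen_inverse A
    obtain ⟨GB, hGB⟩ := exists_gen_inverse B
    refine ⟨(GA ⊗ₖ GB) *ᵥ v, ?_⟩
    rw [Matrix.mulVecLin_apply, Matrix.mulVec_mulVec, ← Matrix.mul_kronecker_mul]
    have hfac : (A * GA) ⊗ₖ (B * GB) =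
        ((A * GA) ⊗ₖ (1 : Matrix mB mB F)) * ((1 : Matrix mA mA F) ⊗ₖ (B * GB)) := by
      rw [← Matrix.mul_kronecker_mul, Matrix.mul_one, Matrix.one_mul]
    rw [hfac, ← Matrix.mulVec_mulVec]
    have h1 : ((1 : Matrix mA mA F) ⊗ₖ (B * GB)) *ᵥ v = v := by
      rw [← hx, Matrix.mulVec_mulVec, ← Matrix.mul_kronecker_mul, Matrix.one_mul,
        hGB]
    rw [h1, ← hy, Matrix.mulVec_mulVec, ← Matrix.mul_kronecker_mul, Matrix.one_mul,
      hGA]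
  · rintro v ⟨z, rfl⟩
    constructor
    · refine ⟨(A ⊗ₖ (1 : Matrix nB nB F)) *ᵥ z, ?_⟩
      rw [Matrix.mulVecLin_apply, Matrix.mulVecLin_apply, Matrix.mulVec_mulVec,
        ← Matrix.mul_kronecker_mul, Matrix.one_mul, Matrix.mul_one]
    · refine ⟨((1 : Matrix nA nA F) ⊗ₖ B) *ᵥ z, ?_⟩
      rw [Matrix.mulVecLin_apply, Matrix.mulVecLin_apply, Matrix.mulVec_mulVec,
        ← Matrix.mul_kronecker_mul, Matrix.one_mul, Matrix.mul_one]

/-- The rank of the hypergraph-product check matrix `[I ⊗ B | A ⊗ I]`. -/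
lemma rank_hgp_block {mA nA mB nB : Type*} [Fintype mA] [Fintype nA] [Fintype mB] [Fintype nB]
    [DecidableEq mA] [DecidableEq nA] [DecidableEq mB] [DecidableEq nB]
    (A : Matrix mA nA F) (B : Matrix mB nB F) :
    (fromCols ((1 : Matrix mA mA F) ⊗ₖ B) (A ⊗ₖ (1 : Matrix mB mB F))).rank
        + (A ⊗ₖ B).rank =
      ((1 : Matrix mA mA F) ⊗ₖ B).rank + (A ⊗ₖ (1 : Matrix mB mB F)).rank := by
  have h := Submodule.finrank_sup_add_finrank_inf_eq
    (LinearMap.range (((1 : Matrix mA mA F) ⊗ₖ B).mulVecLin :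
        (mA × nB → F) →ₗ[F] (mA × mB → F)))
    (LinearMap.range ((A ⊗ₖ (1 : Matrix mB mB F)).mulVecLin :
        (nA × mB → F) →ₗ[F] (mA × mB → F)))
  rw [inf_range_kron] at h
  unfold Matrix.rank
  rw [range_fromColumns]
  exact h

end Aux

/-- the qudit hypergraph product code built from `H_A ∈ F_q^{m_A×n_A}` and
`H_B ∈ F_q^{m_B×n_B}` with `H_X = [I_{m_A} ⊗ H_B | H_A ⊗ I_{m_B}]` and
`H_Z = [H_Aᵀ ⊗ I_{n_B} | −I_{n_A} ⊗ H_Bᵀ]` on `n = m_A n_B + n_A m_B` coordinates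
encodes `k = (n_A − r_A)(m_B − r_B) + (m_A − r_A)(n_B − r_B)` logical qudits, where
`r_A = rank H_A`, `r_B = rank H_B`. -/
theorem hgp_code_dimension
    {F : Type*} [Field F] [Fintype F] (mA nA mB nB : ℕ)
    (HA : Matrix (Fin mA) (Fin nA) F) (HB : Matrix (Fin mB) (Fin nB) F)
    (HX : Matrix (Fin mA × Fin mB) ((Fin mA × Fin nB) ⊕ (Fin nA × Fin mB)) F)
    (HZ : Matrix (Fin nA × Fin nB) ((Fin mA × Fin nB) ⊕ (Fin nA × Fin mB)) F)
    (hHX : HX = fromCols ((1 : Matrix (Fin mA) (Fin mA) F) ⊗ₖ HB)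
        (HA ⊗ₖ (1 : Matrix (Fin mB) (Fin mB) F)))
    (hHZ : HZ = fromCols (HAᵀ ⊗ₖ (1 : Matrix (Fin nB) (Fin nB) F))
        (-((1 : Matrix (Fin nA) (Fin nA) F) ⊗ₖ HBᵀ))) :
    ((mA * nB + nA * mB : ℕ) : ℤ) - HX.rank - HZ.rank =
      ((nA : ℤ) - HA.rank) * ((mB : ℤ) - HB.rank) +
        ((mA : ℤ) - HA.rank) * ((nB : ℤ) - HB.rank) := by
  -- the X-check rank equation
  have hX : HX.rank + (HA ⊗ₖ HB).rank =
      ((1 : Matrix (Fin mA) (Fin mA) F) ⊗ₖ HB).rank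
        + (HA ⊗ₖ (1 : Matrix (Fin mB) (Fin mB) F)).rank := by
    rw [hHX]; exact rank_hgp_block HA HB
  -- the Z-check matrix has the same rank as `[I ⊗ Bᵀ | Aᵀ ⊗ I]`
  have hZrank : HZ.rank =
      (fromCols ((1 : Matrix (Fin nA) (Fin nA) F) ⊗ₖ HBᵀ)
        (HAᵀ ⊗ₖ (1 : Matrix (Fin nB) (Fin nB) F))).rank := by
    rw [hHZ]
    unfold Matrix.rank
    rw [range_fromColumns, range_fromColumns]
    have hneg : LinearMap.range (-((1 : Matrix (Fin nA) (Fin nA) F) ⊗ₖ HBᵀ)).mulVecLin =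
        LinearMap.range ((1 : Matrix (Fin nA) (Fin nA) F) ⊗ₖ HBᵀ).mulVecLin := by
      have : (-((1 : Matrix (Fin nA) (Fin nA) F) ⊗ₖ HBᵀ)).mulVecLin =
          -(((1 : Matrix (Fin nA) (Fin nA) F) ⊗ₖ HBᵀ).mulVecLin) := by
        ext x i
        simp [Matrix.mulVecLin_apply, Matrix.neg_mulVec]
      rw [this, LinearMap.range_neg]
    rw [hneg, sup_comm]
  have hZ : HZ.rank + (HAᵀ ⊗ₖ HBᵀ).rank =
      ((1 : Matrix (Fin nA) (Fin nA) F) ⊗ₖ HBᵀ).rank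
        + (HAᵀ ⊗ₖ (1 : Matrix (Fin nB) (Fin nB) F)).rank := by
    rw [hZrank]; exact rank_hgp_block HAᵀ HBᵀ
  -- compute the Kronecker ranks
  rw [rank_kron, rank_kron, rank_kron, Matrix.rank_one, Matrix.rank_one] at hX
  rw [rank_kron, rank_kron, rank_kron, Matrix.rank_one, Matrix.rank_one,
    Matrix.rank_transpose, Matrix.rank_transpose] at hZ
  simp only [Fintype.card_fin] at hX hZ
  -- conclude by arithmetic
  have hX' : (HX.rank : ℤ) + (HA.rank : ℤ) * HB.rank =
      (mA : ℤ) * HB.rank + (HA.rank : ℤ) * mB := by exact_mod_cast hX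
  have hZ' : (HZ.rank : ℤ) + (HA.rank : ℤ) * HB.rank =
      (nA : ℤ) * HB.rank + (HA.rank : ℤ) * nB := by exact_mod_cast hZ
  push_cast
  linear_combination (-1 : ℤ) * hX' + (-1 : ℤ) * hZ'
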